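/- Let N and S be positive integers, let c : Fin N → Fin S → ℝ be a cost matrix, and let m : Fin S → ℕ satisfy ∑_s m s = N. Set p i = 1/N for every i and q s = (m s)/N. Then the discrete Kantorovich cost OT(p, q, c) equals (1/N) times the minimum, over all functions σ : Fin N → Fin S whose fibers satisfy |σ⁻¹({s})| = m s for every s, of ∑_i c i (σ i); in particular the set of such σ is nonempty and the minimum is attained. -/

import Mathlib

open Finset

section aux
variable {N S : ℕ}

/-- Hall's theorem step: any feasible transport plan supports an assignment map with the
prescribed fiber counts. -/
lemma hall_step (hN : 0 < N) (m : Fin S → ℕ) (hm : ∑ s, m s = N)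
    (γ : Fin N → Fin S → ℝ) (hpos : ∀ i j, 0 ≤ γ i j)
    (hrow : ∀ i, ∑ j, γ i j = 1 / N) (hcol : ∀ j, ∑ i, γ i j = (m j : ℝ) / N) :
    ∃ σ : Fin N → Fin S,
      (∀ s, (univ.filter (fun i => σ i = s)).card = m s) ∧ ∀ i, 0 < γ i (σ i) := by
  classical
  set t : Fin N → Finset (Σ s : Fin S, Fin (m s)) :=
    fun i => univ.filter (fun x => 0 < γ i x.1) with ht
  have hall : ∀ A : Finset (Fin N), A.card ≤ (A.biUnion t).card := by
    intro A
    set B : Finset (Fin S) := A.biUnion (fun i => univ.filter (fun s => 0 < γ i s)) with hB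
    have hbU : A.biUnion t = B.sigma (fun s => (univ : Finset (Fin (m s)))) := by
      ext ⟨s, k⟩
      simp [ht, hB, Finset.mem_sigma, Finset.mem_biUnion]
    have hcard : (A.biUnion t).card = ∑ s ∈ B, m s := by
      rw [hbU, Finset.card_sigma]; simp
    rw [hcard]
    have hN' : (0:ℝ) < N := by exact_mod_cast hN
    have key : (A.card : ℝ) / N ≤ (∑ s ∈ B, (m s : ℝ)) / N := by
      calc (A.card : ℝ) / N = ∑ _i ∈ A, (1 / N : ℝ) := by
            rw [Finset.sum_const, nsmul_eq_mul]; ring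
        _ = ∑ i ∈ A, ∑ s, γ i s := Finset.sum_congr rfl (fun i _ => (hrow i).symm)
        _ = ∑ i ∈ A, ∑ s ∈ B, γ i s := by
            refine Finset.sum_congr rfl (fun i hi => ?_)
            refine (Finset.sum_subset (Finset.subset_univ B) ?_).symm
            intro s _ hs
            by_contra h
            have hgt : 0 < γ i s := lt_of_le_of_ne (hpos i s) (Ne.symm h)
            exact hs (Finset.mem_biUnion.mpr ⟨i, hi, by simp [hgt]⟩)
        _ = ∑ s ∈ B, ∑ i ∈ A, γ i s := Finset.sum_comm
        _ ≤ ∑ s ∈ B, ∑ i, γ i s := by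
            refine Finset.sum_le_sum (fun s _ => ?_)
            exact Finset.sum_le_sum_of_subset_of_nonneg (Finset.subset_univ A)
              (fun i _ _ => hpos i s)
        _ = ∑ s ∈ B, (m s : ℝ) / N := Finset.sum_congr rfl (fun s _ => hcol s)
        _ = (∑ s ∈ B, (m s : ℝ)) / N := by rw [Finset.sum_div]
    have hre : (A.card : ℝ) ≤ ∑ s ∈ B, (m s : ℝ) := by
      have := mul_le_mul_of_nonneg_right key (le_of_lt hN')
      rwa [div_mul_cancel₀ _ (ne_of_gt hN'), div_mul_cancel₀ _ (ne_of_gt hN')] at this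
    exact_mod_cast hre
  obtain ⟨f, hfinj, hf⟩ := (Finset.all_card_le_biUnion_card_iff_exists_injective t).mp hall
  have hσpos : ∀ i, 0 < γ i (f i).1 := fun i => by
    have := hf i; simp only [ht, Finset.mem_filter] at this; exact this.2
  refine ⟨fun i => (f i).1, ?_, hσpos⟩
  have hle : ∀ s, (univ.filter (fun i => (f i).1 = s)).card ≤ m s := by
    intro s
    have h1 : (univ.filter (fun i => (f i).1 = s)).card
        ≤ (univ.filter (fun x : (Σ s, Fin (m s)) => x.1 = s)).card := by
      apply Finset.card_le_card_of_injOn f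
      · intro i hi; simpa using hi
      · exact Function.Injective.injOn hfinj
    have h2 : (univ.filter (fun x : (Σ s, Fin (m s)) => x.1 = s)).card = m s := by
      have he : (univ.filter (fun x : (Σ s, Fin (m s)) => x.1 = s))
          = ({s} : Finset (Fin S)).sigma (fun s => (univ : Finset (Fin (m s)))) := by
        ext ⟨a, b⟩; simp
      rw [he, Finset.card_sigma]; simp
    omega
  have hsum : ∑ s, (univ.filter (fun i => (f i).1 = s)).card = N := by
    have := Finset.card_eq_sum_card_fiberwise
      (f := fun i => (f i).1) (s := (univ : Finset (Fin N))) (t := univ)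
      (fun x _ => Finset.mem_univ _)
    simpa using this.symm
  intro s
  by_contra hne
  have hlt : (univ.filter (fun i => (f i).1 = s)).card < m s :=
    lt_of_le_of_ne (hle s) hne
  have : ∑ s, (univ.filter (fun i => (f i).1 = s)).card < ∑ s, m s :=
    Finset.sum_lt_sum (fun s _ => hle s) ⟨s, Finset.mem_univ s, hlt⟩
  omega

/-- Lower bound: every feasible plan has cost at least `M / N`. -/
lemma lower_bound (hN : 0 < N) (c : Fin N → Fin S → ℝ) (m : Fin S → ℕ)
    (hm : ∑ s, m s = N) (M : ℝ)
    (hM : ∀ σ : Fin N → Fin S, (∀ s, (univ.filter (fun i => σ i = s)).card = m s) →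
      M ≤ ∑ i, c i (σ i)) :
    ∀ n : ℕ, ∀ γ : Fin N → Fin S → ℝ, (∀ i j, 0 ≤ γ i j) →
      (∀ i, ∑ j, γ i j = 1 / N) → (∀ j, ∑ i, γ i j = (m j : ℝ) / N) →
      (univ.filter (fun x : Fin N × Fin S => γ x.1 x.2 ≠ 0)).card ≤ n →
      M / N ≤ ∑ i, ∑ j, γ i j * c i j := by
  classical
  have hN' : (0:ℝ) < N := by exact_mod_cast hN
  intro n
  induction n with
  | zero =>
    intro γ hpos hrow hcol hcard
    exfalso
    have hz : ∀ i j, γ i j = 0 := by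
      intro i j
      by_contra h
      have hmem : (i, j) ∈ univ.filter (fun x : Fin N × Fin S => γ x.1 x.2 ≠ 0) := by
        simp [h]
      have := Finset.card_pos.mpr ⟨_, hmem⟩
      omega
    have h0 := hrow ⟨0, hN⟩
    simp only [hz, Finset.sum_const_zero] at h0
    exact absurd h0.symm (ne_of_gt (by positivity))
  | succ n ih =>
    intro γ hpos hrow hcol hcard
    obtain ⟨σ, hσcount, hσpos⟩ := hall_step hN m hm γ hpos hrow hcol
    obtain ⟨i0, _, hmin⟩ := Finset.exists_min_image (univ : Finset (Fin N))
      (fun i => γ i (σ i)) ⟨⟨0, hN⟩, Finset.mem_univ _⟩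
    set τ := γ i0 (σ i0) with hτ
    have hτpos : 0 < τ := hσpos i0
    have hτle : τ ≤ 1 / N := by
      have := Finset.single_le_sum (f := fun j => γ i0 j) (fun j _ => hpos i0 j)
        (Finset.mem_univ (σ i0))
      rw [hrow i0] at this; exact this
    have hMσ : M ≤ ∑ i, c i (σ i) := hM σ hσcount
    have hdiag : ∀ i, γ i (σ i) ≤ 1 / N := by
      intro i
      have := Finset.single_le_sum (f := fun j => γ i j) (fun j _ => hpos i j)
        (Finset.mem_univ (σ i))
      rw [hrow i] at this; exact this
    by_cases hcase : τ = 1 / N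
    · have hdiag' : ∀ i, γ i (σ i) = 1 / N := fun i =>
        le_antisymm (hdiag i) (hcase ▸ hmin i (Finset.mem_univ i))
      have hall1 : ∀ i, ∀ j, j ≠ σ i → γ i j = 0 := by
        intro i j hj
        have hrest : ∑ j ∈ univ.erase (σ i), γ i j = 0 := by
          have h := hrow i
          rw [← Finset.add_sum_erase _ _ (Finset.mem_univ (σ i))] at h
          have := hdiag' i
          linarith
        exact Finset.sum_eq_zero_iff_of_nonneg (fun j _ => hpos i j) |>.mp hrest j
          (Finset.mem_erase.mpr ⟨hj, Finset.mem_univ j⟩)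
      have hcost : ∑ i, ∑ j, γ i j * c i j = (1 / N) * ∑ i, c i (σ i) := by
        rw [Finset.mul_sum]
        refine Finset.sum_congr rfl (fun i _ => ?_)
        rw [Finset.sum_eq_single (σ i)]
        · rw [hdiag' i]
        · intro j _ hj; rw [hall1 i j hj, zero_mul]
        · intro h; exact absurd (Finset.mem_univ (σ i)) h
      rw [hcost, div_eq_mul_inv, mul_comm M, ← one_div]
      exact mul_le_mul_of_nonneg_left hMσ (by positivity)
    · have hτlt : τ < 1 / N := lt_of_le_of_ne hτle hcase
      set lam : ℝ := N * τ with hlam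
      have hlam1 : lam < 1 := by
        rw [hlam]
        have := mul_lt_mul_of_pos_left hτlt hN'
        rwa [mul_one_div, div_self (ne_of_gt hN')] at this
      have hlampos : 0 < lam := by positivity
      have h1lam : (0:ℝ) < 1 - lam := by linarith
      set δ : Fin N → Fin S → ℝ := fun i j => if σ i = j then 1 else 0 with hδ
      set γ' : Fin N → Fin S → ℝ := fun i j => (γ i j - τ * δ i j) / (1 - lam) with hγ'
      have hδrow : ∀ i, ∑ j, δ i j = 1 := by intro i; simp [hδ]
      have hδcol : ∀ j, ∑ i, δ i j = (m j : ℝ) := by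
        intro j
        simp only [hδ]
        rw [Finset.sum_boole]
        exact_mod_cast hσcount j
      have hτeq : τ = lam / N := by rw [hlam]; field_simp
      have hpos' : ∀ i j, 0 ≤ γ' i j := by
        intro i j
        apply div_nonneg _ (le_of_lt h1lam)
        by_cases h : σ i = j
        · subst h
          simp only [hδ, if_pos rfl, mul_one]
          have := hmin i (Finset.mem_univ i)
          linarith
        · simp only [hδ, if_neg h, mul_zero, sub_zero]; exact hpos i j
      have hrow' : ∀ i, ∑ j, γ' i j = 1 / N := by
        intro i
        simp only [hγ']
        rw [← Finset.sum_div, Finset.sum_sub_distrib, ← Finset.mul_sum, hrow i, hδrow i,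
          hτeq]
        field_simp
      have hcol' : ∀ j, ∑ i, γ' i j = (m j : ℝ) / N := by
        intro j
        simp only [hγ']
        rw [← Finset.sum_div, Finset.sum_sub_distrib, ← Finset.mul_sum, hcol j, hδcol j,
          hτeq]
        field_simp
      have hsupp : (univ.filter (fun x : Fin N × Fin S => γ' x.1 x.2 ≠ 0)).card ≤ n := by
        have hsub : (univ.filter (fun x : Fin N × Fin S => γ' x.1 x.2 ≠ 0))
            ⊆ (univ.filter (fun x : Fin N × Fin S => γ x.1 x.2 ≠ 0)).erase (i0, σ i0) := by
          rintro ⟨i, j⟩ hij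
          simp only [Finset.mem_filter, Finset.mem_univ, true_and] at hij
          rw [Finset.mem_erase]
          refine ⟨?_, ?_⟩
          · intro h
            apply hij
            have h1 : i = i0 := congrArg Prod.fst h
            have h2 : j = σ i0 := congrArg Prod.snd h
            subst h1; subst h2
            simp [hγ', hδ, ← hτ]
          · simp only [Finset.mem_filter, Finset.mem_univ, true_and]
            intro h
            apply hij
            have hδ0 : δ i j = 0 := by
              simp only [hδ]
              rw [if_neg]
              intro hc
              rw [← hc] at h
              exact absurd h (ne_of_gt (hσpos i))
            simp only [hγ', h, hδ0, mul_zero, sub_zero, zero_div]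
        have hmem : (i0, σ i0) ∈ univ.filter (fun x : Fin N × Fin S => γ x.1 x.2 ≠ 0) := by
          simp only [Finset.mem_filter, Finset.mem_univ, true_and]; exact hτpos.ne'
        have hc2 := Finset.card_le_card hsub
        rw [Finset.card_erase_of_mem hmem] at hc2
        omega
      have hIH := ih γ' hpos' hrow' hcol' hsupp
      have hdecomp : ∀ i j, γ i j = (1 - lam) * γ' i j + τ * δ i j := by
        intro i j
        simp only [hγ']
        field_simp
        ring
      have hcost : ∑ i, ∑ j, γ i j * c i j
          = (1 - lam) * (∑ i, ∑ j, γ' i j * c i j) + τ * ∑ i, c i (σ i) := by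
        have hterm : ∀ i, ∑ j, γ i j * c i j
            = (1 - lam) * (∑ j, γ' i j * c i j) + τ * c i (σ i) := by
          intro i
          have h1 : ∑ j, γ i j * c i j
              = ∑ j, ((1 - lam) * (γ' i j * c i j) + τ * (δ i j * c i j)) := by
            refine Finset.sum_congr rfl (fun j _ => ?_)
            rw [hdecomp i j]; ring
          rw [h1, Finset.sum_add_distrib, ← Finset.mul_sum, ← Finset.mul_sum]
          congr 1
          congr 1
          simp [hδ, ite_mul]
        rw [Finset.sum_congr rfl (fun i _ => hterm i), Finset.sum_add_distrib,
          ← Finset.mul_sum, ← Finset.mul_sum]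
      have e1 : lam * (M / N) = τ * M := by
        rw [hlam]; field_simp
      have i1 : (1 - lam) * (M / N) ≤ (1 - lam) * (∑ i, ∑ j, γ' i j * c i j) :=
        mul_le_mul_of_nonneg_left hIH (le_of_lt h1lam)
      have i2 : τ * M ≤ τ * ∑ i, c i (σ i) :=
        mul_le_mul_of_nonneg_left hMσ (le_of_lt hτpos)
      rw [hcost]
      linarith

end aux

/-- Discrete Kantorovich optimal transport cost between probability vectors `p` and `q`
with cost matrix `c`: the infimum of `∑ i, ∑ j, γ i j * c i j` over all transport plans
`γ` with nonnegative entries and the prescribed marginals. -/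
noncomputable def discreteOT {α β : Type*} [Fintype α] [Fintype β]
    (p : α → ℝ) (q : β → ℝ) (c : α → β → ℝ) : ℝ :=
  sInf { v : ℝ | ∃ γ : α → β → ℝ,
    (∀ i j, 0 ≤ γ i j) ∧ (∀ i, ∑ j, γ i j = p i) ∧ (∀ j, ∑ i, γ i j = q j) ∧
    v = ∑ i, ∑ j, γ i j * c i j }

/-- **Monge–Kantorovich identity (Eq. (47))**: with uniform source weights `1/N` and
target weights `m s / N` (where `∑ s, m s = N`), the discrete Kantorovich cost equals
`(1/N)` times the minimum of `∑ i, c i (σ i)` over assignment maps `σ : Fin N → Fin S`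
whose fiber over each `s` has exactly `m s` elements; in particular the set of such
assignments is nonempty and the minimum is attained. -/
theorem stmt0 (N S : ℕ) (hN : 0 < N) (hS : 0 < S)
    (c : Fin N → Fin S → ℝ) (m : Fin S → ℕ) (hm : ∑ s, m s = N) :
    ∃ σ₀ : Fin N → Fin S,
      (∀ s, (Finset.univ.filter (fun i => σ₀ i = s)).card = m s) ∧
      (∀ σ : Fin N → Fin S,
        (∀ s, (Finset.univ.filter (fun i => σ i = s)).card = m s) →
        ∑ i, c i (σ₀ i) ≤ ∑ i, c i (σ i)) ∧
      discreteOT (fun _ : Fin N => 1 / (N : ℝ)) (fun s => (m s : ℝ) / N) c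
        = (1 / (N : ℝ)) * ∑ i, c i (σ₀ i) := by
  classical
  have hN' : (0:ℝ) < N := by exact_mod_cast hN
  -- nonemptiness via Hall on a strictly feasible plan
  have hne : ∃ σ : Fin N → Fin S,
      ∀ s, (univ.filter (fun i => σ i = s)).card = m s := by
    obtain ⟨σ, hσ, _⟩ := hall_step hN m hm (fun i s => (m s : ℝ) / (N * N))
      (fun i j => by positivity)
      (fun i => by
        rw [← Finset.sum_div]
        have : ∑ s, (m s : ℝ) = N := by exact_mod_cast hm
        rw [this]
        field_simp)
      (fun j => by
        rw [Finset.sum_const, Finset.card_univ, Fintype.card_fin, nsmul_eq_mul]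
        field_simp)
    exact ⟨σ, hσ⟩
  -- minimum over the finite nonempty set of admissible assignments
  obtain ⟨σw, hσw⟩ := hne
  set A : Finset (Fin N → Fin S) :=
    univ.filter (fun σ => ∀ s, (univ.filter (fun i => σ i = s)).card = m s) with hA
  have hAne : A.Nonempty := ⟨σw, by simp [hA, hσw]⟩
  obtain ⟨σ₀, hσ₀A, hσ₀min⟩ := Finset.exists_min_image A (fun σ => ∑ i, c i (σ i)) hAne
  have hσ₀count : ∀ s, (univ.filter (fun i => σ₀ i = s)).card = m s := by
    have := hσ₀A; simp only [hA, Finset.mem_filter, Finset.mem_univ, true_and] at this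
    exact this
  have hσ₀min' : ∀ σ : Fin N → Fin S,
      (∀ s, (univ.filter (fun i => σ i = s)).card = m s) →
      ∑ i, c i (σ₀ i) ≤ ∑ i, c i (σ i) := by
    intro σ hσ
    exact hσ₀min σ (by simp [hA, hσ])
  set M : ℝ := ∑ i, c i (σ₀ i) with hMdef
  refine ⟨σ₀, hσ₀count, hσ₀min', ?_⟩
  set V : Set ℝ := { v : ℝ | ∃ γ : Fin N → Fin S → ℝ,
    (∀ i j, 0 ≤ γ i j) ∧ (∀ i, ∑ j, γ i j = (fun _ : Fin N => 1 / (N : ℝ)) i) ∧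
    (∀ j, ∑ i, γ i j = (fun s => (m s : ℝ) / N) j) ∧
    v = ∑ i, ∑ j, γ i j * c i j } with hV
  have hlow : ∀ v ∈ V, M / N ≤ v := by
    rintro v ⟨γ, hpos, hrow, hcol, rfl⟩
    exact lower_bound hN c m hm M hσ₀min'
      (univ.filter (fun x : Fin N × Fin S => γ x.1 x.2 ≠ 0)).card γ hpos hrow hcol le_rfl
  have hmem : (1 / (N:ℝ)) * M ∈ V := by
    refine ⟨fun i j => if σ₀ i = j then 1 / N else 0, ?_, ?_, ?_, ?_⟩
    · intro i j
      dsimp only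
      by_cases h : σ₀ i = j
      · rw [if_pos h]; positivity
      · rw [if_neg h]
    · intro i; simp
    · intro j
      have h1 : ∑ i, (if σ₀ i = j then (1:ℝ)/N else 0)
          = (∑ i, (if σ₀ i = j then (1:ℝ) else 0)) * (1/N) := by
        rw [Finset.sum_mul]
        refine Finset.sum_congr rfl (fun i _ => ?_)
        split <;> simp
      rw [h1, Finset.sum_boole, hσ₀count j]
      ring
    · rw [Finset.mul_sum]
      refine Finset.sum_congr rfl (fun i _ => ?_)
      rw [Finset.sum_eq_single (σ₀ i)]
      · dsimp only; rw [if_pos rfl]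
      · intro j _ hj; dsimp only; rw [if_neg (fun h => hj h.symm), zero_mul]
      · intro h; exact absurd (Finset.mem_univ (σ₀ i)) h
  have heq : M / N = (1 / (N:ℝ)) * M := by rw [div_eq_mul_inv, mul_comm, one_div]
  show sInf V = (1 / (N:ℝ)) * M
  apply le_antisymm
  · exact csInf_le ⟨M / N, fun v hv => hlow v hv⟩ hmem
  · rw [← heq]
    exact le_csInf ⟨_, hmem⟩ hlow
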